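/- Let k ∈ ℕ and let ℓ be an integer with 0 ≤ ℓ ≤ k. Then there exists a constant c_{k,ℓ} > 0 such that for all ξ₁, ξ₂ ∈ ℝ, the absolute value of the determinant of the k×k matrix whose columns are Γ_k'(ξ₁), Γ_k''(ξ₁), …, Γ_k^{(ℓ)}(ξ₁), Γ_k'(ξ₂), Γ_k''(ξ₂), …, Γ_k^{(k−ℓ)}(ξ₂) is at least c_{k,ℓ}·|ξ₁ − ξ₂|^{ℓ(k−ℓ)}. -/

import Mathlib

open MeasureTheory Real FourierTransform Finset
open scoped RealInnerProductSpace

noncomputable section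

/-- Euclidean space `ℝ^k`. -/
abbrev Ek (k : ℕ) := EuclideanSpace ℝ (Fin k)

/-- The moment curve `Γ_k(t) = (t, t², …, t^k)`. -/
def momentCurve (k : ℕ) (t : ℝ) : Ek k := WithLp.toLp 2 fun j => t ^ ((j : ℕ) + 1)

/-- The `i`-th derivative `Γ_k^{(i)}(t)` of the moment curve. -/
def momentDeriv (k i : ℕ) (t : ℝ) : Ek k := WithLp.toLp 2 fun j =>
  if i ≤ (j : ℕ) + 1 then (((j : ℕ) + 1).descFactorial i : ℝ) * t ^ ((j : ℕ) + 1 - i) else 0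

/-- The parallelepiped `C ⬝ 𝒰_J` for the interval `J = [a,b]`: centered at `Γ_k(c_J)`, with
`i`-th side of length `4|J|^i` in direction `Γ_k^{(i)}(c_J)`, dilated by factor `C` about
its center. -/
def UBox (k : ℕ) (C a b : ℝ) : Set (Ek k) :=
  {x | ∃ u : Fin k → ℝ, (∀ i : Fin k, abs (u i) ≤ C * (2 * (b - a) ^ ((i : ℕ) + 1))) ∧
    x = momentCurve k ((a + b) / 2) +
      ∑ i : Fin k, u i • momentDeriv k ((i : ℕ) + 1) ((a + b) / 2)}

/-- The dual parallelepiped `𝒰_J^o`. -/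
def UBoxDual (k : ℕ) (a b : ℝ) : Set (Ek k) :=
  {x | ∀ i : Fin k,
    abs (inner ℝ x (momentDeriv k ((i : ℕ) + 1) ((a + b) / 2)) : ℝ) ≤ ((b - a) ^ ((i : ℕ) + 1))⁻¹ / 4}

/-- The `L¹`-normalized bump function `φ_J` adapted to `𝒰_J^o`, `J = [a,b]`. -/
def phiBump (k : ℕ) (a b : ℝ) (x : Ek k) : ℝ :=
  ((volume (UBoxDual k a b)).toReal)⁻¹ *
    sInf {t : ℝ | 1 ≤ t ∧ t⁻¹ • x ∈ UBoxDual k a b} ^ (-(10 * (k : ℝ)))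

/-- `L^p`-norm (with real exponent) of a function on `ℝ^k`. -/
def LpN {k : ℕ} (p : ℝ) (f : Ek k → ℂ) : ℝ := (∫ x, ‖f x‖ ^ p) ^ p⁻¹

/-- Convolution of two real-valued functions on `ℝ^k`. -/
def cnv {k : ℕ} (f g : Ek k → ℝ) (x : Ek k) : ℝ := ∫ y, f y * g (x - y)

/-- The critical decoupling exponent `p_k = k(k+1)`. -/
def pk (k : ℕ) : ℝ := k * (k + 1)

/-- The `ℓ²L^{p_k}` decoupling inequality for the moment curve `Γ_k` at scale `δ = 1/n`
with constant `C`. -/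
def DecIneq (k n : ℕ) (C : ℝ) : Prop :=
  ∀ f : ℕ → SchwartzMap (Ek k) ℂ,
    (∀ j < n, Function.support (𝓕 ⇑(f j)) ⊆ UBox k 1 ((j : ℝ) / n) (((j : ℝ) + 1) / n)) →
    LpN (pk k) (fun x => ∑ j ∈ Finset.range n, f j x) ≤
      C * (∑ j ∈ Finset.range n, LpN (pk k) (f j) ^ 2) ^ ((1 : ℝ) / 2)

/-- The decoupling constant `𝒟_k(δ)`, `δ = 1/n`: the smallest constant, monotone
nonincreasing in `δ`, for which the decoupling inequality holds. -/
def DecConst (k n : ℕ) : ℝ :=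
  sInf {C : ℝ | 0 ≤ C ∧ ∀ m : ℕ, 0 < m → m ≤ n → DecIneq k m C}

/-- The bilinear decoupling inequality for `Γ_k` at scale `δ = 1/n` with constant `C`. -/
def BilinIneq (k n : ℕ) (C : ℝ) : Prop :=
  ∀ (α β : ℝ) (m₁ m₂ : ℕ), 0 < m₁ → 0 < m₂ →
    0 ≤ α → α + (m₁ : ℝ) / n ≤ 1 → 0 ≤ β → β + (m₂ : ℝ) / n ≤ 1 →
    (∀ x ∈ Set.Icc α (α + (m₁ : ℝ) / n), ∀ y ∈ Set.Icc β (β + (m₂ : ℝ) / n),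
      (4 : ℝ)⁻¹ ≤ |x - y|) →
    ∀ f g : ℕ → SchwartzMap (Ek k) ℂ,
    (∀ j < m₁, Function.support (𝓕 ⇑(f j)) ⊆ UBox k 1 (α + j / n) (α + (j + 1) / n)) →
    (∀ j < m₂, Function.support (𝓕 ⇑(g j)) ⊆ UBox k 1 (β + j / n) (β + (j + 1) / n)) →
    (∫ x, ‖∑ j ∈ Finset.range m₁, f j x‖ ^ (pk k / 2) *
        ‖∑ j ∈ Finset.range m₂, g j x‖ ^ (pk k / 2)) ^ (pk k)⁻¹ ≤
      C * (∑ j ∈ Finset.range m₁, LpN (pk k) (f j) ^ 2) ^ ((1 : ℝ) / 4) *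
        (∑ j ∈ Finset.range m₂, LpN (pk k) (g j) ^ 2) ^ ((1 : ℝ) / 4)

/-- The bilinear decoupling constant `ℬ_k(δ)`, `δ = 1/n`, monotone nonincreasing in `δ`. -/
def BilinConst (k n : ℕ) : ℝ :=
  sInf {C : ℝ | 0 ≤ C ∧ ∀ m : ℕ, 0 < m → m ≤ n → BilinIneq k m C}

/-- Partial sum `Σ_{m ∈ [s,t)} f_m` of a family of Schwartz functions,
corresponding to `f_L = Σ_{K ∈ 𝒫(L,δ)} f_K`. -/
def fSum (f : ℕ → SchwartzMap (Ek 3) ℂ) (s t : ℕ) (x : Ek 3) : ℂ :=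
  ∑ m ∈ Finset.Ico s t, f m x

/-- The asymmetric bilinear inequality on `ℝ³` with exponents `(e₁, e₂)` on the left and
`(r₁, r₂)` on the right, at scale `δ = 1/n`, with first interval of length `1/na` and
second interval of length `1/nb`, with constant `C`. -/
def MIneq (e₁ e₂ r₁ r₂ : ℝ) (n na nb : ℕ) (C : ℝ) : Prop :=
  ∀ α β : ℝ, 0 ≤ α → α + (na : ℝ)⁻¹ ≤ 1 → 0 ≤ β → β + (nb : ℝ)⁻¹ ≤ 1 →
    (∀ x ∈ Set.Icc α (α + (na : ℝ)⁻¹), ∀ y ∈ Set.Icc β (β + (nb : ℝ)⁻¹),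
      (4 : ℝ)⁻¹ ≤ |x - y|) →
    ∀ f g : ℕ → SchwartzMap (Ek 3) ℂ,
    (∀ j < n / na, Function.support (𝓕 ⇑(f j)) ⊆
      UBox 3 1 (α + (j : ℝ) / n) (α + ((j : ℝ) + 1) / n)) →
    (∀ j < n / nb, Function.support (𝓕 ⇑(g j)) ⊆
      UBox 3 1 (β + (j : ℝ) / n) (β + ((j : ℝ) + 1) / n)) →
    ∫ x, cnv (fun y => ‖∑ j ∈ Finset.range (n / na), f j y‖ ^ e₁)
        (phiBump 3 α (α + (na : ℝ)⁻¹)) x *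
      cnv (fun y => ‖∑ j ∈ Finset.range (n / nb), g j y‖ ^ e₂)
        (phiBump 3 β (β + (nb : ℝ)⁻¹)) x ≤
      C ^ (12 : ℕ) * (∑ j ∈ Finset.range (n / na), LpN 12 (f j) ^ 2) ^ r₁ *
        (∑ j ∈ Finset.range (n / nb), LpN 12 (g j) ^ 2) ^ r₂

/-- `M_{6,a,b}(δ)` where `δ = 1/n`, `δ^a = 1/na`, `δ^b = 1/nb`. -/
def M6 (n na nb : ℕ) : ℝ := sInf {C : ℝ | 0 ≤ C ∧ MIneq 6 6 3 3 n na nb C}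

/-- `M_{2,a,b}(δ)` where `δ = 1/n`, `δ^a = 1/na`, `δ^b = 1/nb`. -/
def M2 (n na nb : ℕ) : ℝ := sInf {C : ℝ | 0 ≤ C ∧ MIneq 2 10 1 5 n na nb C}

end

noncomputable section Aux10

open Polynomial Matrix

/-- ℕ-version of the derivative order of column `j`. -/
def ordN (ℓ j : ℕ) : ℕ := if j < ℓ then j + 1 else j - ℓ + 1

/-- The matrix of the theorem. -/
def Mm (k ℓ : ℕ) (ξ₁ ξ₂ : ℝ) : Matrix (Fin k) (Fin k) ℝ :=
  Matrix.of fun r j : Fin k =>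
    if (j : ℕ) < ℓ then momentDeriv k ((j : ℕ) + 1) ξ₁ r
    else momentDeriv k ((j : ℕ) - ℓ + 1) ξ₂ r

lemma Mm_apply (k ℓ : ℕ) (ξ₁ ξ₂ : ℝ) (r j : Fin k) :
    Mm k ℓ ξ₁ ξ₂ r j = if (j : ℕ) < ℓ then momentDeriv k ((j : ℕ) + 1) ξ₁ r
      else momentDeriv k ((j : ℕ) - ℓ + 1) ξ₂ r := rfl

lemma md_eq (k i : ℕ) (t : ℝ) (r : Fin k) :
    momentDeriv k i t r = (((r : ℕ) + 1).descFactorial i : ℝ) * t ^ ((r : ℕ) + 1 - i) := by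
  have h : momentDeriv k i t r = if i ≤ (r : ℕ) + 1 then
      (((r : ℕ) + 1).descFactorial i : ℝ) * t ^ ((r : ℕ) + 1 - i) else 0 := rfl
  rw [h]
  split_ifs with hc
  · rfl
  · rw [Nat.descFactorial_eq_zero_iff_lt.mpr (by omega), Nat.cast_zero, zero_mul]

lemma md_poly (k i : ℕ) (t : ℝ) (r : Fin k) :
    momentDeriv k i t r = (derivative^[i] (X ^ ((r : ℕ) + 1) : ℝ[X])).eval t := by
  rw [md_eq, iterate_derivative_X_pow_eq_C_mul, eval_mul, eval_C, eval_pow, eval_X]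

lemma it_der_sum {ι : Type*} (s : Finset ι) (f : ι → ℝ[X]) (i : ℕ) :
    derivative^[i] (∑ a ∈ s, f a) = ∑ a ∈ s, derivative^[i] (f a) := by
  induction i with
  | zero => simp
  | succ n ih =>
    rw [Function.iterate_succ_apply', ih, derivative_sum]
    exact Finset.sum_congr rfl fun a _ => (Function.iterate_succ_apply' _ _ _).symm

lemma it_der_comp (s : ℝ) (p : ℝ[X]) (i : ℕ) :
    derivative^[i] (p.comp (X + C s)) = (derivative^[i] p).comp (X + C s) := by
  induction i generalizing p with
  | zero => rfl
  | succ n ih =>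
    rw [Function.iterate_succ_apply, Function.iterate_succ_apply,
      show derivative (p.comp (X + C s)) = (derivative p).comp (X + C s) by
        rw [derivative_comp]; simp]
    exact ih (derivative p)

/-- The unipotent translation matrix. -/
def Amat (k : ℕ) (s : ℝ) : Matrix (Fin k) (Fin k) ℝ :=
  Matrix.of fun r q : Fin k =>
    if (q : ℕ) ≤ (r : ℕ) then
      ((((r : ℕ) + 1).choose ((q : ℕ) + 1) : ℕ) : ℝ) * s ^ ((r : ℕ) - (q : ℕ)) else 0

lemma Amat_apply (k : ℕ) (s : ℝ) (r q : Fin k) :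
    Amat k s r q = if (q : ℕ) ≤ (r : ℕ) then
      ((((r : ℕ) + 1).choose ((q : ℕ) + 1) : ℕ) : ℝ) * s ^ ((r : ℕ) - (q : ℕ)) else 0 := rfl

lemma det_Amat (k : ℕ) (s : ℝ) : (Amat k s).det = 1 := by
  rw [Matrix.det_of_lowerTriangular _ (fun i j hij => by
    have hij' : (i : ℕ) < (j : ℕ) := hij
    rw [Amat_apply, if_neg (by omega)])]
  have h : ∀ r : Fin k, Amat k s r r = 1 := fun r => by
    rw [Amat_apply, if_pos le_rfl, Nat.choose_self, Nat.sub_self, pow_zero, Nat.cast_one, one_mul]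
  simp [h]

lemma transl_entry' (k i : ℕ) (hi : 1 ≤ i) (t s : ℝ) (r : Fin k) :
    momentDeriv k i (t + s) r = ∑ q : Fin k, Amat k s r q * momentDeriv k i t q := by
  have hB : ((X + C s) ^ ((r : ℕ) + 1) : ℝ[X]) =
      ∑ a ∈ Finset.range ((r : ℕ) + 1 + 1),
        C (s ^ ((r : ℕ) + 1 - a) * ((((r : ℕ) + 1).choose a : ℕ) : ℝ)) * X ^ a := by
    rw [add_pow]
    refine Finset.sum_congr rfl fun a _ => ?_
    rw [← C_pow, ← C_eq_natCast, mul_assoc, ← C_mul, mul_comm]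
  have hL2 : momentDeriv k i (t + s) r = ∑ a ∈ Finset.range ((r : ℕ) + 1 + 1),
      s ^ ((r : ℕ) + 1 - a) * ((((r : ℕ) + 1).choose a : ℕ) : ℝ) *
        ((a.descFactorial i : ℝ) * t ^ (a - i)) := by
    have h1 : ((X + C s) ^ ((r : ℕ) + 1) : ℝ[X]) = (X ^ ((r : ℕ) + 1)).comp (X + C s) := by
      rw [X_pow_comp]
    have hL : momentDeriv k i (t + s) r =
        (derivative^[i] ((X + C s) ^ ((r : ℕ) + 1) : ℝ[X])).eval t := by
      rw [md_poly, h1, it_der_comp, eval_comp, eval_add, eval_X, eval_C]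
    rw [hL, hB, it_der_sum, eval_finset_sum]
    refine Finset.sum_congr rfl fun a _ => ?_
    rw [iterate_derivative_C_mul, eval_mul, eval_C, iterate_derivative_X_pow_eq_C_mul,
      eval_mul, eval_C, eval_pow, eval_X]
  have hR : ∑ q : Fin k, Amat k s r q * momentDeriv k i t q
      = ∑ q ∈ Finset.range ((r : ℕ) + 1),
          ((((r : ℕ) + 1).choose (q + 1) : ℕ) : ℝ) * s ^ ((r : ℕ) - q) *
            (((q + 1).descFactorial i : ℝ) * t ^ (q + 1 - i)) := by
    calc ∑ q : Fin k, Amat k s r q * momentDeriv k i t q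
        = ∑ q ∈ Finset.range k, (fun qn : ℕ =>
            (if qn ≤ (r : ℕ) then ((((r : ℕ) + 1).choose (qn + 1) : ℕ) : ℝ) * s ^ ((r : ℕ) - qn)
              else 0) * (((qn + 1).descFactorial i : ℝ) * t ^ (qn + 1 - i))) q := by
          rw [← Fin.sum_univ_eq_sum_range]
          refine Finset.sum_congr rfl fun q _ => ?_
          rw [md_eq, Amat_apply]
      _ = ∑ q ∈ Finset.range ((r : ℕ) + 1),
          ((((r : ℕ) + 1).choose (q + 1) : ℕ) : ℝ) * s ^ ((r : ℕ) - q) *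
            (((q + 1).descFactorial i : ℝ) * t ^ (q + 1 - i)) := by
          rw [← Finset.sum_subset (Finset.range_subset_range.mpr (show (r : ℕ) + 1 ≤ k from r.isLt))
            (fun q _ hq2 => by
              rw [if_neg (by simp only [Finset.mem_range] at hq2 ⊢; omega), zero_mul])]
          refine Finset.sum_congr rfl fun q hq => ?_
          rw [if_pos (by simp only [Finset.mem_range] at hq; omega)]
  rw [hL2, hR, Finset.sum_range_succ']
  have h0 : (Nat.descFactorial 0 i : ℝ) = 0 := by
    rw [Nat.descFactorial_eq_zero_iff_lt.mpr (by omega), Nat.cast_zero]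
  rw [h0]
  simp only [mul_zero, zero_mul, add_zero]
  refine Finset.sum_congr rfl fun q hq => ?_
  rw [show (r : ℕ) + 1 - (q + 1) = (r : ℕ) - q from by omega]
  ring

lemma transl_entry (k i : ℕ) (hi : 1 ≤ i) (x s : ℝ) (r : Fin k) :
    momentDeriv k i x r = ∑ q : Fin k, Amat k s r q * momentDeriv k i (x - s) q := by
  have h := transl_entry' k i hi (x - s) s r
  rwa [show x - s + s = x from by ring] at h

lemma Mm_transl (k ℓ : ℕ) (ξ₁ ξ₂ s : ℝ) :
    Mm k ℓ ξ₁ ξ₂ = Amat k s * Mm k ℓ (ξ₁ - s) (ξ₂ - s) := by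
  ext r j
  rw [Matrix.mul_apply, Mm_apply]
  by_cases hj : (j : ℕ) < ℓ
  · rw [if_pos hj, transl_entry k ((j : ℕ) + 1) (by omega) ξ₁ s r]
    refine Finset.sum_congr rfl fun q _ => ?_
    rw [Mm_apply, if_pos hj]
  · rw [if_neg hj, transl_entry k ((j : ℕ) - ℓ + 1) (by omega) ξ₂ s r]
    refine Finset.sum_congr rfl fun q _ => ?_
    rw [Mm_apply, if_neg hj]

lemma det_transl (k ℓ : ℕ) (ξ₁ ξ₂ s : ℝ) :
    (Mm k ℓ ξ₁ ξ₂).det = (Mm k ℓ (ξ₁ - s) (ξ₂ - s)).det := by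
  rw [Mm_transl k ℓ ξ₁ ξ₂ s, Matrix.det_mul, det_Amat, one_mul]

lemma Mm_scale (k ℓ : ℕ) (lam : ℝ) (hlam : lam ≠ 0) :
    Mm k ℓ lam 0 = Matrix.diagonal (fun r : Fin k => lam ^ ((r : ℕ) + 1)) * Mm k ℓ 1 0 *
      Matrix.diagonal (fun j : Fin k => (lam⁻¹) ^ (ordN ℓ (j : ℕ))) := by
  ext r j
  rw [Matrix.mul_diagonal, Matrix.diagonal_mul, Mm_apply, Mm_apply, ordN]
  by_cases hj : (j : ℕ) < ℓ
  · rw [if_pos hj, if_pos hj, if_pos hj, md_eq, md_eq, one_pow, mul_one, inv_pow]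
    by_cases ho : (j : ℕ) + 1 ≤ (r : ℕ) + 1
    · have he : lam ^ ((r : ℕ) + 1)
          = lam ^ ((r : ℕ) + 1 - ((j : ℕ) + 1)) * lam ^ ((j : ℕ) + 1) := by
        rw [← pow_add]; congr 1; omega
      have hc : lam ^ ((j : ℕ) + 1) * (lam ^ ((j : ℕ) + 1))⁻¹ = 1 :=
        mul_inv_cancel₀ (pow_ne_zero _ hlam)
      rw [he]
      linear_combination (-((((r : ℕ) + 1).descFactorial ((j : ℕ) + 1) : ℝ) *
        lam ^ ((r : ℕ) + 1 - ((j : ℕ) + 1)))) * hc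
    · rw [Nat.descFactorial_eq_zero_iff_lt.mpr (by omega)]
      simp
  · rw [if_neg hj, if_neg hj, if_neg hj, md_eq, inv_pow]
    rcases lt_trichotomy ((j : ℕ) - ℓ + 1) ((r : ℕ) + 1) with h | h | h
    · rw [zero_pow (show (r : ℕ) + 1 - ((j : ℕ) - ℓ + 1) ≠ 0 by omega)]
      simp
    · have hc : lam ^ ((j : ℕ) - ℓ + 1) * (lam ^ ((j : ℕ) - ℓ + 1))⁻¹ = 1 :=
        mul_inv_cancel₀ (pow_ne_zero _ hlam)
      rw [← h, Nat.sub_self, pow_zero, mul_one]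
      linear_combination (-(((j : ℕ) - ℓ + 1).descFactorial ((j : ℕ) - ℓ + 1) : ℝ)) * hc
    · rw [Nat.descFactorial_eq_zero_iff_lt.mpr (by omega)]
      simp

lemma sum_ord (k ℓ : ℕ) (hℓ : ℓ ≤ k) :
    ∑ r ∈ Finset.range k, (r + 1) = (∑ j ∈ Finset.range k, ordN ℓ j) + ℓ * (k - ℓ) := by
  have h1 : ∑ j ∈ Finset.range k, (if j < ℓ then 0 else ℓ) = ℓ * (k - ℓ) := by
    rw [Finset.range_eq_Ico, ← Finset.sum_Ico_consecutive _ (Nat.zero_le ℓ) hℓ]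
    rw [Finset.sum_eq_zero (fun j hj => by rw [if_pos (Finset.mem_Ico.mp hj).2]), zero_add]
    rw [Finset.sum_congr rfl (fun j hj =>
      if_neg (by have := (Finset.mem_Ico.mp hj).1; omega))]
    rw [Finset.sum_const, Nat.card_Ico, smul_eq_mul, mul_comm]
  rw [← h1, ← Finset.sum_add_distrib]
  refine Finset.sum_congr rfl fun j _ => ?_
  rw [ordN]
  by_cases h : j < ℓ
  · rw [if_pos h, if_pos h]
  · rw [if_neg h, if_neg h]; omega

lemma det_scale (k ℓ : ℕ) (hℓ : ℓ ≤ k) (lam : ℝ) (hlam : lam ≠ 0) :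
    (Mm k ℓ lam 0).det = lam ^ (ℓ * (k - ℓ)) * (Mm k ℓ 1 0).det := by
  rw [Mm_scale k ℓ lam hlam, Matrix.det_mul, Matrix.det_mul, Matrix.det_diagonal,
    Matrix.det_diagonal, Finset.prod_pow_eq_pow_sum, Finset.prod_pow_eq_pow_sum]
  rw [show ∑ r : Fin k, ((r : ℕ) + 1) = ∑ r ∈ Finset.range k, (r + 1) from
    Fin.sum_univ_eq_sum_range _ k]
  rw [show ∑ j : Fin k, ordN ℓ (j : ℕ) = ∑ j ∈ Finset.range k, ordN ℓ j from
    Fin.sum_univ_eq_sum_range _ k]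
  rw [sum_ord k ℓ hℓ, pow_add, inv_pow]
  have hc : lam ^ (∑ j ∈ Finset.range k, ordN ℓ j) *
      (lam ^ (∑ j ∈ Finset.range k, ordN ℓ j))⁻¹ = 1 :=
    mul_inv_cancel₀ (pow_ne_zero _ hlam)
  linear_combination (lam ^ (ℓ * (k - ℓ)) * (Mm k ℓ 1 0).det) * hc

lemma det_one_zero_ne (k ℓ : ℕ) (hℓ : ℓ ≤ k) : (Mm k ℓ 1 0).det ≠ 0 := by
  intro h
  obtain ⟨v, hv0, hv⟩ := Matrix.exists_vecMul_eq_zero_iff.mpr h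
  set p : ℝ[X] := ∑ r : Fin k, C (v r) * X ^ ((r : ℕ) + 1) with hp
  have hcol : ∀ j : Fin k, ∑ r : Fin k, v r * Mm k ℓ 1 0 r j = 0 := by
    intro j
    have h2 := congrFun hv j
    simpa [Matrix.vecMul, dotProduct] using h2
  have hde : ∀ (i : ℕ) (t : ℝ), (derivative^[i] p).eval t
      = ∑ r : Fin k, v r * momentDeriv k i t r := by
    intro i t
    rw [hp, it_der_sum, eval_finset_sum]
    refine Finset.sum_congr rfl fun r _ => ?_
    rw [iterate_derivative_C_mul, eval_mul, eval_C, md_poly]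
  set q := derivative p with hqd
  have hdq : ∀ i : ℕ, derivative^[i] q = derivative^[i + 1] p := fun i => by
    rw [hqd, ← Function.iterate_succ_apply]
  have key1 : ∀ i < ℓ, (derivative^[i] q).eval 1 = 0 := by
    intro i hi
    have hjk : i < k := lt_of_lt_of_le hi hℓ
    have hc := hcol ⟨i, hjk⟩
    rw [hdq, hde, ← hc]
    refine Finset.sum_congr rfl fun r _ => ?_
    congr 1
    have hmm : Mm k ℓ 1 0 r ⟨i, hjk⟩ = if i < ℓ then momentDeriv k (i + 1) 1 r
      else momentDeriv k (i - ℓ + 1) 0 r := rfl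
    rw [hmm, if_pos hi]
  have key0 : ∀ i < k - ℓ, (derivative^[i] q).eval 0 = 0 := by
    intro i hi
    have hjk : ℓ + i < k := by omega
    have hc := hcol ⟨ℓ + i, hjk⟩
    have hsum : ∑ r : Fin k, v r * momentDeriv k (i + 1) (0 : ℝ) r
        = ∑ r : Fin k, v r * Mm k ℓ 1 0 r ⟨ℓ + i, hjk⟩ := by
      refine Finset.sum_congr rfl fun r _ => ?_
      congr 1
      have hmm : Mm k ℓ 1 0 r ⟨ℓ + i, hjk⟩ = if ℓ + i < ℓ then momentDeriv k (ℓ + i + 1) 1 r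
        else momentDeriv k (ℓ + i - ℓ + 1) 0 r := rfl
      rw [hmm, if_neg (show ¬ (ℓ + i < ℓ) by omega), Nat.add_sub_cancel_left]
    rw [hdq, hde, hsum]
    exact hc
  by_cases hq0 : q = 0
  · have hdeg0 := Polynomial.natDegree_eq_zero_of_derivative_eq_zero
      (show derivative p = 0 by rw [← hqd]; exact hq0)
    have hpc : p = C (p.coeff 0) := Polynomial.eq_C_of_natDegree_eq_zero hdeg0
    have hc0 : p.coeff 0 = 0 := by
      rw [hp, Polynomial.finset_sum_coeff]
      refine Finset.sum_eq_zero fun r _ => ?_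
      rw [coeff_C_mul, coeff_X_pow, if_neg (by omega), mul_zero]
    have hp0 : p = 0 := by rw [hpc, hc0, map_zero]
    apply hv0
    funext r
    have hcr : p.coeff ((r : ℕ) + 1) = v r := by
      rw [hp, Polynomial.finset_sum_coeff, Finset.sum_eq_single r]
      · rw [coeff_C_mul, coeff_X_pow, if_pos rfl, mul_one]
      · intro b _ hb
        rw [coeff_C_mul, coeff_X_pow, if_neg (fun hh => hb (Fin.ext (by omega))), mul_zero]
      · intro hr; exact absurd (Finset.mem_univ r) hr
    rw [hp0] at hcr
    simpa using hcr.symm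
  · have hd1 : (X - C (1 : ℝ)) ^ ℓ ∣ q := by
      rcases Nat.eq_zero_or_pos ℓ with h0 | hpos
      · rw [h0, pow_zero]; exact one_dvd q
      · have hlt :=
          Polynomial.lt_rootMultiplicity_of_isRoot_iterate_derivative_of_mem_nonZeroDivisors
          (n := ℓ - 1) hq0 (fun m hm => key1 m (by omega))
          (mem_nonZeroDivisors_of_ne_zero (Nat.cast_ne_zero.mpr (Nat.factorial_ne_zero _)))
        exact dvd_trans (pow_dvd_pow _ (by omega)) (Polynomial.pow_rootMultiplicity_dvd q 1)
    have hd0 : (X - C (0 : ℝ)) ^ (k - ℓ) ∣ q := by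
      rcases Nat.eq_zero_or_pos (k - ℓ) with h0 | hpos
      · rw [h0, pow_zero]; exact one_dvd q
      · have hlt :=
          Polynomial.lt_rootMultiplicity_of_isRoot_iterate_derivative_of_mem_nonZeroDivisors
          (n := k - ℓ - 1) hq0 (fun m hm => key0 m (by omega))
          (mem_nonZeroDivisors_of_ne_zero (Nat.cast_ne_zero.mpr (Nat.factorial_ne_zero _)))
        exact dvd_trans (pow_dvd_pow _ (by omega)) (Polynomial.pow_rootMultiplicity_dvd q 0)
    have hcop : IsCoprime ((X - C (1 : ℝ)) ^ ℓ) ((X - C (0 : ℝ)) ^ (k - ℓ)) :=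
      (Polynomial.isCoprime_X_sub_C_of_isUnit_sub (by norm_num : IsUnit ((1 : ℝ) - 0))).pow
    have hdvd := hcop.mul_dvd hd1 hd0
    have hkn : k ≠ 0 := by
      rintro rfl
      exact hq0 (by rw [hqd, hp]; simp)
    have hdegprod : ((X - C (1 : ℝ)) ^ ℓ * (X - C (0 : ℝ)) ^ (k - ℓ)).natDegree = k := by
      rw [Polynomial.natDegree_mul (pow_ne_zero _ (X_sub_C_ne_zero 1))
        (pow_ne_zero _ (X_sub_C_ne_zero 0)), natDegree_pow, natDegree_pow, natDegree_X_sub_C,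
        natDegree_X_sub_C]
      omega
    have hk1 : k ≤ q.natDegree := hdegprod ▸ Polynomial.natDegree_le_of_dvd hdvd hq0
    have hpk : p.natDegree ≤ k := by
      rw [hp]
      refine Polynomial.natDegree_sum_le_of_forall_le _ _ fun r _ => ?_
      exact le_trans (Polynomial.natDegree_C_mul_le _ _) (by rw [natDegree_X_pow]; omega)
    have hqk : q.natDegree ≤ k - 1 := by
      rw [hqd]
      exact le_trans (Polynomial.natDegree_derivative_le p) (by omega)
    omega

lemma det_eq (k ℓ : ℕ) (hℓ : ℓ ≤ k) (ξ₁ ξ₂ : ℝ) :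
    (Mm k ℓ ξ₁ ξ₂).det = (ξ₁ - ξ₂) ^ (ℓ * (k - ℓ)) * (Mm k ℓ 1 0).det := by
  by_cases hxy : ξ₁ = ξ₂
  · subst hxy
    rcases Nat.eq_zero_or_pos ℓ with h0 | hpos
    · subst h0
      rw [Nat.zero_mul, pow_zero, one_mul, det_transl k 0 ξ₁ ξ₁ ξ₁, sub_self]
      congr 1
    rcases eq_or_lt_of_le hℓ with hek | hlt
    · rw [show ℓ * (k - ℓ) = 0 from by simp [hek], pow_zero, one_mul,
        det_transl k ℓ ξ₁ ξ₁ (ξ₁ - 1), show ξ₁ - (ξ₁ - 1) = (1 : ℝ) from by ring]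
      congr 1
      ext r j
      rw [Mm_apply, Mm_apply, if_pos (show (j : ℕ) < ℓ from by have := j.isLt; omega),
        if_pos (show (j : ℕ) < ℓ from by have := j.isLt; omega)]
    · rw [sub_self, zero_pow (Nat.mul_ne_zero (by omega) (by omega)), zero_mul]
      refine Matrix.det_zero_of_column_eq
        (i := (⟨0, by omega⟩ : Fin k)) (j := (⟨ℓ, hlt⟩ : Fin k))
        (Fin.ne_of_val_ne (show (0 : ℕ) ≠ ℓ from by omega)) fun r => ?_
      have h1 : Mm k ℓ ξ₁ ξ₁ r ⟨0, by omega⟩ = if 0 < ℓ then momentDeriv k (0 + 1) ξ₁ r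
        else momentDeriv k (0 - ℓ + 1) ξ₁ r := rfl
      have h2 : Mm k ℓ ξ₁ ξ₁ r ⟨ℓ, hlt⟩ = if ℓ < ℓ then momentDeriv k (ℓ + 1) ξ₁ r
        else momentDeriv k (ℓ - ℓ + 1) ξ₁ r := rfl
      rw [h1, h2, if_pos hpos, if_neg (lt_irrefl ℓ), Nat.sub_self]
  · rw [det_transl k ℓ ξ₁ ξ₂ ξ₂, sub_self, det_scale k ℓ hℓ (ξ₁ - ξ₂) (sub_ne_zero.mpr hxy)]

end Aux10

noncomputable section

theorem stmt10 (k ℓ : ℕ) (hℓ : ℓ ≤ k) :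
    ∃ c > (0:ℝ), ∀ ξ₁ ξ₂ : ℝ,
      c * |ξ₁ - ξ₂| ^ (ℓ * (k - ℓ)) ≤
        |(Matrix.of fun r j : Fin k =>
          if (j : ℕ) < ℓ then momentDeriv k ((j : ℕ) + 1) ξ₁ r
          else momentDeriv k ((j : ℕ) - ℓ + 1) ξ₂ r).det| := by
  refine ⟨|(Mm k ℓ 1 0).det|, abs_pos.mpr (det_one_zero_ne k ℓ hℓ), fun ξ₁ ξ₂ => ?_⟩
  rw [show (Matrix.of fun r j : Fin k =>
      if (j : ℕ) < ℓ then momentDeriv k ((j : ℕ) + 1) ξ₁ r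
      else momentDeriv k ((j : ℕ) - ℓ + 1) ξ₂ r) = Mm k ℓ ξ₁ ξ₂ from rfl]
  rw [det_eq k ℓ hℓ ξ₁ ξ₂, abs_mul, abs_pow]
  exact le_of_eq (mul_comm _ _)


end
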